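/- Let θ = (θ_1,…,θ_κ) : ℝ^d → ℝ^κ be a vector of multilinear functions, θ_k(y) = Σ_{I ∈ 𝓘_k} c^k_I Π_{i∈I} y_i, where each 𝓘_k is a collection of subsets of {1,…,d} and c^k_I ∈ ℝ, and let Θ^Q := { (s, θ(s_{1,n},…,s_{d,n})) : s ∈ Q } ⊆ ℝ^{d×(n+1)} × ℝ^κ. Then conv(Θ^Q) = { (s,θ) : there exists w ∈ ℝ^{{0,…,n}^d} with w ≥ 0, Σ_{j ∈ {0,…,n}^d} w_j = 1, s_i = Σ_{p=0}^{n} v_{i,p} · ( Σ_{j : j_i = p} w_j ) for every i ∈ {1,…,d}, and θ_k = Σ_{I ∈ 𝓘_k} c^k_I Σ_{j ∈ {0,…,n}^d} ( Π_{i∈I} a_{i,j_i} ) w_j for every k ∈ {1,…,κ} }. -/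
import Mathlib


open Finset

noncomputable section

/-- The vertex `v_{i,j}` of the simplex `Q_i` : its `k`-th entry is `a_{i,min(j,k)}`. -/
def vvec (d n : ℕ) (a : Fin d → Fin (n + 1) → ℝ) (i : Fin d) (j : Fin (n + 1)) :
    Fin (n + 1) → ℝ :=
  fun k => a i (min j k)

/-- The simplotope `Q = Q_1 × ⋯ × Q_d`. -/
def Qset (d n : ℕ) (a : Fin d → Fin (n + 1) → ℝ) : Set (Fin d → Fin (n + 1) → ℝ) :=
  {s | ∀ i, s i ∈ convexHull ℝ {w | ∃ j, w = vvec d n a i j}}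

lemma vvec_apply_last (d n : ℕ) (a : Fin d → Fin (n + 1) → ℝ) (i : Fin d) (j : Fin (n + 1)) :
    vvec d n a i j (Fin.last n) = a i j := by
  unfold vvec
  rw [min_eq_left (Fin.le_last j)]

lemma vvec_injective (d n : ℕ) (a : Fin d → Fin (n + 1) → ℝ) (ha : ∀ i, StrictMono (a i))
    (i : Fin d) : Function.Injective (vvec d n a i) := by
  intro j j' h
  have := congrFun h (Fin.last n)
  rw [vvec_apply_last, vvec_apply_last] at this
  exact (ha i).injective this

/-- marginal of a product measure -/
lemma marginal_lemma {d m : ℕ} (lam : Fin d → Fin m → ℝ)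
    (hsum : ∀ i, ∑ q, lam i q = 1) (i₀ : Fin d) (q : Fin m) :
    ∑ j ∈ Finset.univ.filter (fun j : Fin d → Fin m => j i₀ = q), ∏ i, lam i (j i)
      = lam i₀ q := by
  classical
  set mu : Fin d → Fin m → ℝ :=
    fun i p => if i = i₀ then (if p = q then lam i p else 0) else lam i p with hmu
  have h1 : ∑ j : Fin d → Fin m, ∏ i, mu i (j i) = ∏ i, ∑ p, mu i p := by
    rw [Finset.prod_univ_sum]
    rw [Fintype.piFinset_univ]
  have h2 : ∏ i, ∑ p, mu i p = lam i₀ q := by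
    have : ∀ i : Fin d, ∑ p, mu i p = if i = i₀ then lam i₀ q else 1 := by
      intro i
      by_cases hi : i = i₀
      · subst hi
        simp only [hmu, if_pos rfl]
        simp [Finset.sum_ite_eq' Finset.univ q (lam i)]
      · simp only [hmu, if_neg hi]
        exact hsum i
    rw [Finset.prod_congr rfl (fun i _ => this i)]
    rw [Finset.prod_ite_eq' Finset.univ i₀ (fun _ => lam i₀ q)]
    simp
  have h3 : ∑ j : Fin d → Fin m, ∏ i, mu i (j i)
      = ∑ j ∈ Finset.univ.filter (fun j : Fin d → Fin m => j i₀ = q), ∏ i, lam i (j i) := by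
    rw [← Finset.sum_filter_add_sum_filter_not Finset.univ (fun j : Fin d → Fin m => j i₀ = q)]
    have e1 : ∑ j ∈ Finset.univ.filter (fun j : Fin d → Fin m => j i₀ = q), ∏ i, mu i (j i)
        = ∑ j ∈ Finset.univ.filter (fun j : Fin d → Fin m => j i₀ = q), ∏ i, lam i (j i) := by
      apply Finset.sum_congr rfl
      intro j hj
      rw [Finset.mem_filter] at hj
      apply Finset.prod_congr rfl
      intro i _
      by_cases hi : i = i₀
      · subst hi; simp [hmu, hj.2]
      · simp [hmu, hi]
    have e2 : ∑ j ∈ Finset.univ.filter (fun j : Fin d → Fin m => ¬ j i₀ = q),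
        ∏ i, mu i (j i) = 0 := by
      apply Finset.sum_eq_zero
      intro j hj
      rw [Finset.mem_filter] at hj
      apply Finset.prod_eq_zero (Finset.mem_univ i₀)
      simp [hmu, hj.2]
    rw [e1, e2, add_zero]
  rw [← h3, h1, h2]

lemma prod_sum_eq {d m : ℕ} (lam : Fin d → Fin m → ℝ) (hsum : ∀ i, ∑ q, lam i q = 1)
    (g : Fin d → Fin m → ℝ) (I : Finset (Fin d)) :
    ∏ i ∈ I, (∑ q, lam i q * g i q)
      = ∑ j : Fin d → Fin m, (∏ i ∈ I, g i (j i)) * ∏ i, lam i (j i) := by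
  classical
  have key : ∀ j : Fin d → Fin m, (∏ i ∈ I, g i (j i)) * ∏ i, lam i (j i)
      = ∏ i, (if i ∈ I then g i (j i) else 1) * lam i (j i) := by
    intro j
    rw [Finset.prod_mul_distrib, Finset.prod_ite_mem Finset.univ I (fun i => g i (j i)),
      Finset.univ_inter]
  rw [Finset.sum_congr rfl (fun j _ => key j)]
  have hps := Finset.prod_univ_sum (fun _ : Fin d => (Finset.univ : Finset (Fin m)))
    (fun i p => (if i ∈ I then g i p else 1) * lam i p)
  rw [Fintype.piFinset_univ] at hps
  rw [← hps]
  have : ∀ i : Fin d, ∑ p, (if i ∈ I then g i p else 1) * lam i p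
      = if i ∈ I then ∑ q, lam i q * g i q else 1 := by
    intro i
    by_cases hi : i ∈ I
    · simp only [if_pos hi]
      apply Finset.sum_congr rfl; intros; ring
    · simp only [if_neg hi, one_mul]
      exact hsum i
  rw [Finset.prod_congr rfl (fun i _ => this i), Finset.prod_ite_mem, Finset.univ_inter]

/-- The vertex point of the lifted polytope. -/
def Fpt (d n κ : ℕ) (a : Fin d → Fin (n + 1) → ℝ) (Icoll : Fin κ → Finset (Finset (Fin d)))
    (c : Fin κ → Finset (Fin d) → ℝ) (j : Fin d → Fin (n + 1)) :
    (Fin d → Fin (n + 1) → ℝ) × (Fin κ → ℝ) :=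
  (fun i => vvec d n a i (j i), fun k => ∑ I ∈ Icoll k, c k I * ∏ i ∈ I, a i (j i))

lemma combo_fst (d n κ : ℕ) (a : Fin d → Fin (n + 1) → ℝ)
    (Icoll : Fin κ → Finset (Finset (Fin d))) (c : Fin κ → Finset (Fin d) → ℝ)
    (w : (Fin d → Fin (n + 1)) → ℝ) (i : Fin d) :
    (∑ j : Fin d → Fin (n + 1), w j • Fpt d n κ a Icoll c j).1 i
      = ∑ q : Fin (n + 1),
          (∑ j ∈ Finset.univ.filter (fun j : Fin d → Fin (n + 1) => j i = q), w j) •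
            vvec d n a i q := by
  classical
  rw [Prod.fst_sum, Finset.sum_apply]
  have : ∀ j : Fin d → Fin (n + 1),
      (w j • Fpt d n κ a Icoll c j).1 i = w j • vvec d n a i (j i) := by
    intro j; rfl
  rw [Finset.sum_congr rfl (fun j _ => this j)]
  rw [← Finset.sum_fiberwise Finset.univ (fun j : Fin d → Fin (n + 1) => j i)
    (fun j => w j • vvec d n a i (j i))]
  apply Finset.sum_congr rfl
  intro q _
  rw [Finset.sum_smul]
  apply Finset.sum_congr rfl
  intro j hj
  rw [Finset.mem_filter] at hj
  rw [hj.2]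

lemma combo_snd (d n κ : ℕ) (a : Fin d → Fin (n + 1) → ℝ)
    (Icoll : Fin κ → Finset (Finset (Fin d))) (c : Fin κ → Finset (Fin d) → ℝ)
    (w : (Fin d → Fin (n + 1)) → ℝ) (k : Fin κ) :
    (∑ j : Fin d → Fin (n + 1), w j • Fpt d n κ a Icoll c j).2 k
      = ∑ I ∈ Icoll k, c k I *
          ∑ j : Fin d → Fin (n + 1), (∏ i ∈ I, a i (j i)) * w j := by
  classical
  rw [Prod.snd_sum, Finset.sum_apply]
  have e1 : ∀ j : Fin d → Fin (n + 1),
      (w j • Fpt d n κ a Icoll c j).2 k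
        = ∑ I ∈ Icoll k, c k I * ((∏ i ∈ I, a i (j i)) * w j) := by
    intro j
    show w j * ∑ I ∈ Icoll k, c k I * ∏ i ∈ I, a i (j i) = _
    rw [Finset.mul_sum]
    apply Finset.sum_congr rfl; intros; ring
  rw [Finset.sum_congr rfl (fun j _ => e1 j), Finset.sum_comm]
  apply Finset.sum_congr rfl
  intro I _
  rw [Finset.mul_sum]

theorem statement_12
    (d n κ : ℕ) (hd : 1 ≤ d) (hn : 1 ≤ n)
    (a : Fin d → Fin (n + 1) → ℝ) (ha : ∀ i, StrictMono (a i))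
    (Icoll : Fin κ → Finset (Finset (Fin d)))
    (c : Fin κ → Finset (Fin d) → ℝ) :
    convexHull ℝ
        {p : (Fin d → Fin (n + 1) → ℝ) × (Fin κ → ℝ) |
          p.1 ∈ Qset d n a ∧
          ∀ k : Fin κ, p.2 k =
            ∑ I ∈ Icoll k, c k I * ∏ i ∈ I, p.1 i (Fin.last n)} =
      {p : (Fin d → Fin (n + 1) → ℝ) × (Fin κ → ℝ) |
        ∃ w : (Fin d → Fin (n + 1)) → ℝ,
          (∀ j, 0 ≤ w j) ∧ (∑ j : Fin d → Fin (n + 1), w j) = 1 ∧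
          (∀ i : Fin d, p.1 i =
            ∑ q : Fin (n + 1),
              (∑ j ∈ Finset.univ.filter (fun j : Fin d → Fin (n + 1) => j i = q), w j) •
                vvec d n a i q) ∧
          ∀ k : Fin κ, p.2 k =
            ∑ I ∈ Icoll k, c k I *
              ∑ j : Fin d → Fin (n + 1), (∏ i ∈ I, a i (j i)) * w j} := by
  classical
  set F := Fpt d n κ a Icoll c with hF
  set base : Set ((Fin d → Fin (n + 1) → ℝ) × (Fin κ → ℝ)) :=
    {p | p.1 ∈ Qset d n a ∧
      ∀ k : Fin κ, p.2 k = ∑ I ∈ Icoll k, c k I * ∏ i ∈ I, p.1 i (Fin.last n)} with hbase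
  -- vertices are in the base set
  have hFbase : ∀ j, F j ∈ base := by
    intro j
    constructor
    · intro i
      exact subset_convexHull ℝ _ ⟨j i, rfl⟩
    · intro k
      show (∑ I ∈ Icoll k, c k I * ∏ i ∈ I, a i (j i)) = _
      apply Finset.sum_congr rfl
      intro I _
      congr 1
      apply Finset.prod_congr rfl
      intro i _
      rw [hF]
      show a i (j i) = vvec d n a i (j i) (Fin.last n)
      rw [vvec_apply_last]
  have hFinj : Function.Injective F := by
    intro j j' h
    funext i
    have := congrFun (congrArg Prod.fst h) i
    exact vvec_injective d n a ha i this
  ext p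
  simp only [Set.mem_setOf_eq]
  constructor
  · -- LHS ⊆ RHS
    intro hp
    -- step 1 : base ⊆ convexHull of range F
    have hbsub : base ⊆ convexHull ℝ ↑(Finset.univ.image F) := by
      intro x hx
      obtain ⟨hx1, hx2⟩ := hx
      -- extract weights from each simplex
      have hlam : ∀ i : Fin d, ∃ lam : Fin (n + 1) → ℝ,
          (∀ q, 0 ≤ lam q) ∧ (∑ q, lam q) = 1 ∧
          x.1 i = ∑ q, lam q • vvec d n a i q := by
        intro i
        have hset : {w : Fin (n + 1) → ℝ | ∃ j, w = vvec d n a i j}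
            = ↑(Finset.univ.image (vvec d n a i)) := by
          ext y
          simp [eq_comm]
        have := hx1 i
        rw [hset, Finset.convexHull_eq] at this
        obtain ⟨w', hw0, hw1, hwc⟩ := this
        refine ⟨fun q => w' (vvec d n a i q), ?_, ?_, ?_⟩
        · intro q
          exact hw0 _ (Finset.mem_image_of_mem _ (Finset.mem_univ q))
        · rw [← hw1, Finset.sum_image (fun q _ q' _ h => vvec_injective d n a ha i h)]
        · rw [← hwc, Finset.centerMass_eq_of_sum_1 _ id hw1,
            Finset.sum_image (fun q _ q' _ h => vvec_injective d n a ha i h)]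
          rfl
      choose lam hlam0 hlam1 hlamx using hlam
      set w : (Fin d → Fin (n + 1)) → ℝ := fun j => ∏ i, lam i (j i) with hw
      have hw0 : ∀ j, 0 ≤ w j := fun j => Finset.prod_nonneg (fun i _ => hlam0 i (j i))
      have hw1 : (∑ j : Fin d → Fin (n + 1), w j) = 1 := by
        rw [hw, ← Fintype.piFinset_univ, ← Finset.prod_univ_sum]
        simp [hlam1]
      -- x equals the convex combination
      have hxeq : x = ∑ j : Fin d → Fin (n + 1), w j • F j := by
        apply Prod.ext
        · funext i
          rw [hF, combo_fst d n κ a Icoll c w i, hlamx i]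
          apply Finset.sum_congr rfl
          intro q _
          congr 1
          rw [hw]
          exact (marginal_lemma lam hlam1 i q).symm
        · funext k
          rw [hF, combo_snd d n κ a Icoll c w k, hx2 k]
          apply Finset.sum_congr rfl
          intro I _
          congr 1
          have hx1last : ∀ i : Fin d, x.1 i (Fin.last n) = ∑ q, lam i q * a i q := by
            intro i
            rw [hlamx i, Finset.sum_apply]
            apply Finset.sum_congr rfl
            intro q _
            rw [Pi.smul_apply, vvec_apply_last, smul_eq_mul]
          rw [Finset.prod_congr rfl (fun i _ => hx1last i)]
          exact prod_sum_eq lam hlam1 a I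
      rw [hxeq, ← Finset.centerMass_eq_of_sum_1 _ F hw1]
      exact Finset.centerMass_mem_convexHull _ (fun j _ => hw0 j) (by rw [hw1]; norm_num)
        (fun j _ => Finset.mem_coe.mpr (Finset.mem_image_of_mem _ (Finset.mem_univ j)))
    have hp' : p ∈ convexHull ℝ ↑(Finset.univ.image F) :=
      convexHull_min hbsub (convex_convexHull ℝ _) hp
    -- step 2 : conv (image F) ⊆ RHS
    rw [Finset.convexHull_eq] at hp'
    obtain ⟨w', hw0, hw1, hwc⟩ := hp'
    refine ⟨fun j => w' (F j), ?_, ?_, ?_, ?_⟩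
    · intro j
      exact hw0 _ (Finset.mem_image_of_mem _ (Finset.mem_univ j))
    · rw [← hw1, Finset.sum_image (fun j _ j' _ h => hFinj h)]
    · intro i
      have : p = ∑ j : Fin d → Fin (n + 1), w' (F j) • F j := by
        rw [← hwc, Finset.centerMass_eq_of_sum_1 _ id hw1,
          Finset.sum_image (fun j _ j' _ h => hFinj h)]
        rfl
      rw [this, hF]
      exact combo_fst d n κ a Icoll c _ i
    · intro k
      have : p = ∑ j : Fin d → Fin (n + 1), w' (F j) • F j := by
        rw [← hwc, Finset.centerMass_eq_of_sum_1 _ id hw1,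
          Finset.sum_image (fun j _ j' _ h => hFinj h)]
        rfl
      rw [this, hF]
      exact combo_snd d n κ a Icoll c _ k
  · -- RHS ⊆ LHS
    rintro ⟨w, hw0, hw1, hws, hwt⟩
    have hpeq : p = ∑ j : Fin d → Fin (n + 1), w j • F j := by
      apply Prod.ext
      · funext i
        rw [hF, combo_fst d n κ a Icoll c w i]
        exact hws i
      · funext k
        rw [hF, combo_snd d n κ a Icoll c w k]
        exact hwt k
    rw [hpeq, ← Finset.centerMass_eq_of_sum_1 _ F hw1]
    exact Finset.centerMass_mem_convexHull _ (fun j _ => hw0 j) (by rw [hw1]; norm_num)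
      (fun j _ => hFbase j)
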